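/- (Per-step tracking recursion, deterministic errors.) Let A : ℝⁿ → ℝᵐ be a nonzero linear map with smallest nonzero singular value σ_min and largest singular value σ_max; set χ := σ_min/σ_max. Let f : ℝⁿ → ℝ be convex and differentiable with L-Lipschitz gradient, with set of minimizers S = {x : A x = u} for u in the range of A, ∇f vanishing on S, and satisfying quadratic growth f(x) − f* ≥ (μ/2) dist(x, S)² with μ > 0. Let S' = {x : A x = u'} for u' in the range of A, and suppose there exist x* ∈ S and y* ∈ S' with ‖y* − x*‖ ≤ σ_v. Fix ε ≥ 0, ν ≥ 0, α > 0 with αL(1+ν)² < 1; set ℓ² := 1 − μα(1 − αL(1+ν)²) + 2ναL, assume 0 < ℓ² < 1, and ζ := α(1+αL)/ℓ. Then for any x ∈ ℝⁿ and e ∈ ℝⁿ with ‖e‖ ≤ ε + ν‖∇f(x)‖, the update x⁺ = x − α(∇f(x) + e) satisfies dist(x⁺, S') ≤ (ℓ/χ) dist(x, S) + (ζε + σ_v)/χ. -/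

import Mathlib

open Metric Set intervalIntegral

local notation "⟪" x ", " y "⟫" => @inner ℝ _ _ x y

section Aux

variable {E : Type*} [NormedAddCommGroup E] [InnerProductSpace ℝ E] [CompleteSpace E]

omit [CompleteSpace E] in
lemma line_hasDerivAt (x y : E) (t : ℝ) :
    HasDerivAt (fun t : ℝ => (AffineMap.lineMap x y : ℝ →ᵃ[ℝ] E) t) (y - x) t := by
  simp only [AffineMap.coe_lineMap]
  simpa using ((hasDerivAt_id t).smul_const (y - x)).add_const x

lemma comp_line_hasDerivAt (f : E → ℝ) (hdiff : Differentiable ℝ f) (x y : E) (t : ℝ) :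
    HasDerivAt (f ∘ (AffineMap.lineMap x y : ℝ →ᵃ[ℝ] E))
      ⟪gradient f ((AffineMap.lineMap x y : ℝ →ᵃ[ℝ] E) t), y - x⟫ t := by
  have hF := (hdiff _).hasGradientAt.hasFDerivAt
    (x := (AffineMap.lineMap x y : ℝ →ᵃ[ℝ] E) t)
  have := hF.comp_hasDerivAt t (line_hasDerivAt x y t)
  simpa [InnerProductSpace.toDual_apply_apply] using this

lemma convex_grad_ineq (f : E → ℝ) (hconv : ConvexOn ℝ Set.univ f)
    (hdiff : Differentiable ℝ f) (x y : E) :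
    ⟪gradient f x, y - x⟫ ≤ f y - f x := by
  set c : ℝ →ᵃ[ℝ] E := AffineMap.lineMap x y with hc
  have hconvg : ConvexOn ℝ Set.univ (f ∘ c) := by
    simpa using hconv.comp_affineMap c
  have hg0 := comp_line_hasDerivAt f hdiff x y 0
  have hslope := hconvg.deriv_le_slope (mem_univ (0:ℝ)) (mem_univ 1) one_pos
    hg0.differentiableAt
  rw [hg0.deriv] at hslope
  simpa [slope_def_field, hc, Function.comp] using hslope

lemma descent_lemma (f : E → ℝ) (hdiff : Differentiable ℝ f) (L : ℝ) (hL : 0 < L)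
    (hLip : ∀ u v : E, ‖gradient f u - gradient f v‖ ≤ L * ‖u - v‖) (x y : E) :
    f y ≤ f x + ⟪gradient f x, y - x⟫ + L / 2 * ‖y - x‖ ^ 2 := by
  set c : ℝ →ᵃ[ℝ] E := AffineMap.lineMap x y with hc
  set g' : ℝ → ℝ := fun t => ⟪gradient f (c t), y - x⟫ with hg'
  have hgrad_cont : Continuous (gradient f) := by
    have : LipschitzWith (Real.toNNReal L) (gradient f) := by
      apply LipschitzWith.of_dist_le_mul
      intro u v
      simpa [dist_eq_norm, Real.coe_toNNReal L hL.le] using hLip u v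
    exact this.continuous
  have hccont : Continuous fun t : ℝ => c t := by
    simp only [hc, AffineMap.coe_lineMap]
    continuity
  have hg'cont : Continuous g' :=
    (hgrad_cont.comp hccont).inner continuous_const
  have hftc : ∫ t in (0:ℝ)..1, g' t = (f ∘ c) 1 - (f ∘ c) 0 :=
    integral_eq_sub_of_hasDerivAt (fun t _ => comp_line_hasDerivAt f hdiff x y t)
      (hg'cont.intervalIntegrable 0 1)
  have hbound : ∀ t ∈ Set.Icc (0:ℝ) 1, g' t ≤ g' 0 + L * ‖y - x‖ ^ 2 * t := by
    intro t ht
    have h1 : g' t - g' 0 = ⟪gradient f (c t) - gradient f (c 0), y - x⟫ := by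
      simp [hg', inner_sub_left]
    have h2 : ⟪gradient f (c t) - gradient f (c 0), y - x⟫ ≤
        ‖gradient f (c t) - gradient f (c 0)‖ * ‖y - x‖ :=
      real_inner_le_norm _ _
    have h3 : ‖gradient f (c t) - gradient f (c 0)‖ ≤ L * (t * ‖y - x‖) := by
      have := hLip (c t) (c 0)
      have hcc : c t - c 0 = t • (y - x) := by
        simp only [hc, AffineMap.lineMap_apply_module]; module
      rw [hcc] at this
      simpa [norm_smul, abs_of_nonneg ht.1] using this
    nlinarith [norm_nonneg (y - x), ht.1, mul_nonneg (mul_nonneg hL.le ht.1) (norm_nonneg (y-x))]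
  have hint : ∫ t in (0:ℝ)..1, g' t ≤ ∫ t in (0:ℝ)..1, (g' 0 + L * ‖y - x‖ ^ 2 * t) := by
    apply integral_mono_on zero_le_one (hg'cont.intervalIntegrable 0 1)
      (Continuous.intervalIntegrable (by continuity) 0 1) hbound
  have hval : ∫ t in (0:ℝ)..1, (g' 0 + L * ‖y - x‖ ^ 2 * t) = g' 0 + L / 2 * ‖y - x‖ ^ 2 := by
    rw [intervalIntegral.integral_add (intervalIntegrable_const)
      ((intervalIntegral.intervalIntegrable_id).const_mul _)]
    rw [intervalIntegral.integral_const_mul, integral_id, intervalIntegral.integral_const]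
    norm_num
    ring
  have hc1 : (f ∘ c) 1 = f y := by simp [hc]
  have hc0 : (f ∘ c) 0 = f x := by simp [hc]
  have hg'0 : g' 0 = ⟪gradient f x, y - x⟫ := by simp [hg', hc]
  rw [hftc] at hint
  rw [hval, hc1, hc0, hg'0] at hint
  linarith

end Aux

lemma sq_le_imp {a b : ℝ} (ha : 0 ≤ a) (hb : 0 ≤ b) (h : a^2 ≤ b^2) : a ≤ b := by
  nlinarith

lemma lt_one_of_sq {l : ℝ} (h : l^2 < 1) (h0 : 0 < l) : l < 1 := by nlinarith

lemma key_contract (μ L α ν d h G ip r ℓ : ℝ)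
    (hμ : 0 < μ) (hL : 0 < L) (hα : 0 < α) (hν : 0 ≤ ν)
    (hd0 : 0 ≤ d) (hG0 : 0 ≤ G) (hh0 : 0 ≤ h)
    (hstep : α * L * (1 + ν) ^ 2 < 1)
    (hiph : h ≤ ip) (hQGx : μ / 2 * d ^ 2 ≤ h)
    (hG2 : G ^ 2 ≤ 2 * L * h) (hGLd : G ≤ L * d)
    (hr0 : 0 ≤ r) (hr2 : r ^ 2 = d^2 - 2*α*ip + α^2 * G^2)
    (hℓpos : 0 < ℓ)
    (hℓsq : ℓ ^ 2 = 1 - μ * α * (1 - α * L * (1 + ν) ^ 2) + 2 * ν * α * L) :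
    r + α * ν * G ≤ ℓ * d := by
  have hν1 : (1:ℝ) ≤ (1+ν)^2 := by nlinarith
  have hαL1 : α * L ≤ 1 := by nlinarith [mul_pos hα hL]
  have hβ : 0 < 1 - α * L * (1+ν)^2 := by linarith
  have p1 : 0 ≤ α * (ip - h) := mul_nonneg hα.le (by linarith)
  have p2 : 0 ≤ α^2 * (2*L*h - G^2) := mul_nonneg (sq_nonneg α) (by linarith)
  have hs : r ^ 2 ≤ d^2 - 2*α*h + 2*α^2*L*h := by nlinarith [p1, p2, hr2]
  have p3 : 0 ≤ 2*α*h*(1 - α*L) := by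
    apply mul_nonneg (by positivity) (by linarith)
  have hrd : r ≤ d := by
    apply sq_le_imp hr0 hd0
    nlinarith [hs, p3]
  have c1 : α*ν*G*r ≤ α*ν*G*d :=
    mul_le_mul_of_nonneg_left hrd (by positivity)
  have c2 : α*ν*d*G ≤ α*ν*d*(L*d) :=
    mul_le_mul_of_nonneg_left hGLd (by positivity)
  have t3 : 0 ≤ α^2*ν^2*(2*L*h - G^2) :=
    mul_nonneg (by positivity) (by linarith)
  have t5 : 0 ≤ α*(1 - α*L*(1+ν)^2)*(2*h - μ*d^2) := by
    apply mul_nonneg (mul_nonneg hα.le hβ.le)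
    nlinarith [hQGx]
  have t6 : 0 ≤ 4*α^2*L*h*ν := by positivity
  have hexp : (r + α*ν*G)^2 = r^2 + 2*(α*ν*G*r) + α^2*ν^2*G^2 := by ring
  have hℓd : ℓ^2*d^2 = (1 - μ * α * (1 - α * L * (1 + ν) ^ 2) + 2 * ν * α * L)*d^2 := by
    rw [hℓsq]
  have hq2 : (r + α*ν*G)^2 ≤ ℓ^2 * d^2 := by
    linarith [hexp.le, hexp.ge, hs, c1, c2, t3, t5, t6, hℓd.le, hℓd.ge]
  apply sq_le_imp (by positivity) (mul_nonneg hℓpos.le hd0)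
  rw [mul_pow]
  exact hq2





/-- Per-step tracking recursion, deterministic errors:
`dist(x⁺, S') ≤ (ℓ/χ) dist(x, S) + (ζε + σ_v)/χ`. -/
theorem per_step_tracking_recursion {n m : ℕ}
    (A : EuclideanSpace ℝ (Fin n) →L[ℝ] EuclideanSpace ℝ (Fin m)) (hA : A ≠ 0)
    (σmin σmax χ : ℝ)
    (hσmin : σmin = sInf {c : ℝ | ∃ x : EuclideanSpace ℝ (Fin n),
      x ≠ 0 ∧ x ∈ (LinearMap.ker A.toLinearMap)ᗮ ∧ c = ‖A x‖ / ‖x‖})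
    (hσmax : σmax = ‖A‖) (hχ : χ = σmin / σmax)
    (f : EuclideanSpace ℝ (Fin n) → ℝ)
    (hconv : ConvexOn ℝ Set.univ f) (hdiff : Differentiable ℝ f)
    (L : ℝ) (hL : 0 < L)
    (hLip : ∀ u v : EuclideanSpace ℝ (Fin n), ‖gradient f u - gradient f v‖ ≤ L * ‖u - v‖)
    (u u' : EuclideanSpace ℝ (Fin m)) (hu : u ∈ Set.range A) (hu' : u' ∈ Set.range A)
    (S S' : Set (EuclideanSpace ℝ (Fin n)))
    (hS : S = {x | A x = u}) (hS' : S' = {x | A x = u'})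
    (hSmin : S = {x | ∀ y : EuclideanSpace ℝ (Fin n), f x ≤ f y})
    (hgrad0 : ∀ y ∈ S, gradient f y = 0)
    (fstar : ℝ) (hfstar : ∀ x ∈ S, f x = fstar)
    (μ : ℝ) (hμ : 0 < μ)
    (hQG : ∀ x : EuclideanSpace ℝ (Fin n), μ / 2 * Metric.infDist x S ^ 2 ≤ f x - fstar)
    (σv : ℝ)
    (hclose : ∃ xs ∈ S, ∃ ys ∈ S', ‖ys - xs‖ ≤ σv)
    (ε ν α : ℝ) (hε : 0 ≤ ε) (hν : 0 ≤ ν) (hα : 0 < α)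
    (hstep : α * L * (1 + ν) ^ 2 < 1)
    (ℓ ζ : ℝ) (hℓpos : 0 < ℓ)
    (hℓsq : ℓ ^ 2 = 1 - μ * α * (1 - α * L * (1 + ν) ^ 2) + 2 * ν * α * L)
    (hℓlt : ℓ ^ 2 < 1) (hζ : ζ = α * (1 + α * L) / ℓ) :
    ∀ (x e xp : EuclideanSpace ℝ (Fin n)),
      ‖e‖ ≤ ε + ν * ‖gradient f x‖ →
      xp = x - α • (gradient f x + e) →
      Metric.infDist xp S' ≤ ℓ / χ * Metric.infDist x S + (ζ * ε + σv) / χ := by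
  intro x e xp he hxp
  -- ### Part 1: χ ∈ (0, 1]
  have hAnorm : (0:ℝ) < ‖A‖ := by
    rw [norm_pos_iff]; exact hA
  set K : Submodule ℝ (EuclideanSpace ℝ (Fin n)) := (LinearMap.ker A.toLinearMap)ᗮ with hK
  have hKne : K ≠ ⊥ := by
    intro hbot
    have htop : LinearMap.ker A.toLinearMap = ⊤ := Submodule.orthogonal_eq_bot_iff.mp hbot
    apply hA
    ext z i
    have : A z = 0 := LinearMap.mem_ker.mp (by rw [htop]; trivial)
    simp [this]
  obtain ⟨x₀, hx₀K, hx₀ne⟩ := Submodule.exists_mem_ne_zero_of_ne_bot hKne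
  set B : K →ₗ[ℝ] EuclideanSpace ℝ (Fin m) :=
    (A : EuclideanSpace ℝ (Fin n) →ₗ[ℝ] EuclideanSpace ℝ (Fin m)).domRestrict K with hB
  have hkerB : LinearMap.ker B = ⊥ := by
    rw [LinearMap.ker_eq_bot']
    intro z hz
    have hzker : (z : EuclideanSpace ℝ (Fin n)) ∈ LinearMap.ker A.toLinearMap := by
      simpa [hB] using hz
    have hzorth := z.2
    rw [Submodule.mem_orthogonal] at hzorth
    have : ⟪(z : EuclideanSpace ℝ (Fin n)), (z : EuclideanSpace ℝ (Fin n))⟫ = 0 :=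
      hzorth _ hzker
    have hz0 : (z : EuclideanSpace ℝ (Fin n)) = 0 := inner_self_eq_zero.mp this
    exact Subtype.ext hz0
  obtain ⟨K0, hK0, hanti⟩ := B.exists_antilipschitzWith hkerB
  have hK0' : (0:ℝ) < (K0:ℝ) := hK0
  set Sσ : Set ℝ := {c : ℝ | ∃ x : EuclideanSpace ℝ (Fin n),
      x ≠ 0 ∧ x ∈ (LinearMap.ker A.toLinearMap)ᗮ ∧ c = ‖A x‖ / ‖x‖} with hSσ
  have hSσne : Sσ.Nonempty := ⟨‖A x₀‖ / ‖x₀‖, x₀, hx₀ne, hx₀K, rfl⟩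
  have hSσbdd : BddBelow Sσ := by
    refine ⟨0, ?_⟩
    rintro b ⟨z, hzne, hzK, rfl⟩
    positivity
  have hlow : ∀ b ∈ Sσ, (K0:ℝ)⁻¹ ≤ b := by
    rintro b ⟨z, hzne, hzK, rfl⟩
    have hz : ‖z‖ ≤ (K0:ℝ) * ‖A z‖ := by
      have := hanti.le_mul_dist ⟨z, hzK⟩ 0
      simpa [hB, dist_eq_norm] using this
    have hzpos : (0:ℝ) < ‖z‖ := norm_pos_iff.mpr hzne
    rw [le_div_iff₀ hzpos, inv_mul_le_iff₀ hK0']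
    linarith only [hz]
  have hσminpos : 0 < σmin := by
    rw [hσmin]
    exact lt_of_lt_of_le (inv_pos.mpr hK0') (le_csInf hSσne hlow)
  have hσminle : σmin ≤ σmax := by
    rw [hσmin, hσmax]
    refine le_trans (csInf_le hSσbdd ⟨x₀, hx₀ne, hx₀K, rfl⟩) ?_
    rw [div_le_iff₀ (norm_pos_iff.mpr hx₀ne)]
    exact A.le_opNorm x₀
  have hσmaxpos : 0 < σmax := lt_of_lt_of_le hσminpos hσminle
  have hχpos : 0 < χ := by rw [hχ]; exact div_pos hσminpos hσmaxpos
  have hχle : χ ≤ 1 := by rw [hχ]; exact (div_le_one hσmaxpos).mpr hσminle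
  -- ### Part 2: projection and basic quantities
  obtain ⟨z₀, hz₀⟩ := hu
  have hSclosed : IsClosed S := by
    rw [hS]
    exact isClosed_singleton.preimage A.continuous
  have hSne : S.Nonempty := ⟨z₀, by rw [hS]; exact hz₀⟩
  obtain ⟨p, hpS, hpd⟩ := hSclosed.exists_infDist_eq_dist hSne x
  set d := Metric.infDist x S with hd
  have hdp : d = ‖x - p‖ := by rw [← dist_eq_norm]; exact hpd
  have hd0 : 0 ≤ d := Metric.infDist_nonneg
  set g := gradient f x with hg
  have hgp : gradient f p = 0 := hgrad0 p hpS
  have hfp : f p = fstar := hfstar p hpS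
  have hGLd : ‖g‖ ≤ L * d := by
    have h1 := hLip x p
    rw [hgp, sub_zero] at h1
    rw [hdp]
    exact h1
  set G := ‖g‖ with hGdef
  have hG0 : 0 ≤ G := norm_nonneg _
  -- convexity: f x - fstar ≤ ⟪g, x - p⟫
  set ip := ⟪g, x - p⟫ with hipdef
  have hip : f x - fstar ≤ ip := by
    have h1 := convex_grad_ineq f hconv hdiff x p
    have h2 : ⟪g, p - x⟫ = -ip := by
      rw [hipdef, ← inner_neg_right]
      congr 1
      abel
    rw [h2] at h1
    rw [hfp] at h1
    linarith only [h1]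
  set h := f x - fstar with hhdef
  have hQGx : μ / 2 * d ^ 2 ≤ h := hQG x
  have hh0 : 0 ≤ h := le_trans (by positivity) hQGx
  -- minimality of fstar
  have hmin : ∀ z, fstar ≤ f z := by
    intro z
    have hp' : p ∈ {x | ∀ y, f x ≤ f y} := hSmin ▸ hpS
    rw [← hfp]
    exact hp' z
  -- descent: G² ≤ 2 L h
  have hG2 : G ^ 2 ≤ 2 * L * h := by
    have hdl := descent_lemma f hdiff L hL hLip x (x - (1/L) • g)
    have h1 : (x - (1/L) • g) - x = -((1/L) • g) := by abel
    have h2 : ⟪g, (x - (1/L) • g) - x⟫ = -(1/L) * G^2 := by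
      rw [h1, inner_neg_right, real_inner_smul_right, real_inner_self_eq_norm_sq]
      ring
    have h3 : ‖(x - (1/L) • g) - x‖^2 = (1/L)^2 * G^2 := by
      rw [h1, norm_neg, norm_smul]
      rw [Real.norm_eq_abs, abs_of_pos (by positivity : (0:ℝ) < 1/L)]
      ring
    rw [h2, h3] at hdl
    have h4 := hmin (x - (1/L) • g)
    have hL' : L ≠ 0 := ne_of_gt hL
    rw [hhdef]
    have : fstar ≤ f x + -(1/L) * G^2 + L/2 * ((1/L)^2 * G^2) := le_trans h4 hdl
    have hexp : f x + -(1/L) * G^2 + L/2 * ((1/L)^2 * G^2) = f x - G^2/(2*L) := by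
      field_simp
      ring
    rw [hexp] at this
    have h6 : G^2/(2*L) ≤ f x - fstar := by linarith
    have h7 := (div_le_iff₀ (by positivity : (0:ℝ) < 2*L)).mp h6
    linarith only [h7]
  -- r = ‖x - p - α g‖
  set r := ‖x - p - α • g‖ with hrdef
  have hr0 : 0 ≤ r := norm_nonneg _
  have hr2 : r ^ 2 = d^2 - 2*α*ip + α^2 * G^2 := by
    rw [hrdef, hdp]
    have : x - p - α • g = (x - p) - α • g := by abel
    rw [this, norm_sub_sq_real, real_inner_smul_right, norm_smul, Real.norm_eq_abs,
      abs_of_pos hα]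
    rw [real_inner_comm]
    rw [← hipdef, ← hGdef]
    ring
  have hqld : r + α * ν * G ≤ ℓ * d :=
    key_contract μ L α ν d h G ip r ℓ hμ hL hα hν hd0 hG0 hh0 hstep hip hQGx hG2 hGLd
      hr0 hr2 hℓpos hℓsq
  -- ‖xp - p‖ ≤ q + α ε
  have hxpp : ‖xp - p‖ ≤ (r + α * ν * G) + α * ε := by
    have h1 : xp - p = (x - p - α • g) - α • e := by
      rw [hxp, smul_add]
      abel
    rw [h1]
    refine le_trans (norm_sub_le _ _) ?_
    have h2 : ‖α • e‖ = α * ‖e‖ := by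
      rw [norm_smul, Real.norm_eq_abs, abs_of_pos hα]
    rw [h2]
    have h3 : α * ‖e‖ ≤ α * (ε + ν * G) := mul_le_mul_of_nonneg_left he hα.le
    linarith only [h3]
  -- dist to S'
  obtain ⟨xs, hxs, ys, hys, hyx⟩ := hclose
  have hσv0 : 0 ≤ σv := le_trans (norm_nonneg _) hyx
  have hwS' : p + (ys - xs) ∈ S' := by
    rw [hS']
    have hApu : A p = u := by rw [hS] at hpS; exact hpS
    have hAxs : A xs = u := by rw [hS] at hxs; exact hxs
    have hAys : A ys = u' := by rw [hS'] at hys; exact hys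
    simp only [Set.mem_setOf_eq, map_add, map_sub, hApu, hAxs, hAys]
    abel
  have hdistS' : Metric.infDist xp S' ≤ ‖xp - p‖ + σv := by
    refine le_trans (Metric.infDist_le_dist_of_mem hwS') ?_
    rw [dist_eq_norm]
    have : xp - (p + (ys - xs)) = (xp - p) - (ys - xs) := by abel
    rw [this]
    refine le_trans (norm_sub_le _ _) ?_
    linarith
  -- final arithmetic
  have hℓlt1 : ℓ < 1 := lt_one_of_sq hℓlt hℓpos
  have hαζ : α ≤ ζ := by
    rw [hζ, le_div_iff₀ hℓpos]
    exact mul_le_mul_of_nonneg_left (by linarith [mul_pos hα hL, hℓlt1]) hα.le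
  have hζ0 : 0 ≤ ζ := le_trans hα.le hαζ
  have hchain : Metric.infDist xp S' ≤ ℓ * d + α * ε + σv := by
    linarith only [hdistS', hxpp, hqld]
  have hfinal : ℓ * d + α * ε + σv ≤ ℓ / χ * d + (ζ * ε + σv) / χ := by
    have key : ∀ t : ℝ, 0 ≤ t → t ≤ t / χ := by
      intro t ht
      rw [le_div_iff₀ hχpos]
      exact mul_le_of_le_one_right ht hχle
    have k1 : ℓ * d ≤ (ℓ * d) / χ := key _ (by positivity)
    have k2 : ζ * ε + σv ≤ (ζ * ε + σv) / χ := key _ (by positivity)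
    have k3 : α * ε ≤ ζ * ε := mul_le_mul_of_nonneg_right hαζ hε
    have : ℓ / χ * d = (ℓ * d) / χ := by ring
    rw [this]
    linarith only [k1, k2, k3]
  exact le_trans hchain hfinal
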